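/- For each η ≥ 2 define V_N(η) = sInf { Q_DC(MSE_N^η(ν), PA_N^η(ν)) : ν a best response among N-node strategies at threshold η }, and V_2(η) analogously for 2-node strategies. Assume that for every η ≥ 2 and every a ∈ (0,1] the constrained optima c_η^N(a) and c_η^2(a) are attained by some strategies with acceptance probability at least a, and that best responses exist at every threshold η in both games. Then V_N(η) = V_2(η) for all η ≥ 2, and consequently a threshold η₀ ≥ 2 maximizes V_N over [2, ∞) if and only if it maximizes V_2 over [2, ∞) (i.e., the data collector's optimal threshold is the same regardless of the number of adversarial nodes). -/

import Mathlib

open MeasureTheory ProbabilityTheory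

noncomputable section

def midN (N : ℕ) (p : ℝ × (Fin (N-1) → ℝ)) : ℝ :=
  (max p.1 (⨆ i, p.2 i) + min p.1 (⨅ i, p.2 i)) / 2

def accN (N : ℕ) (η Δ : ℝ) : Set (ℝ × (Fin (N-1) → ℝ)) :=
  {p | max p.1 (⨆ i, p.2 i) - min p.1 (⨅ i, p.2 i) ≤ η * Δ}

def PA_N (N : ℕ) (η Δ : ℝ) (μ : Measure ℝ) (ν : Measure (Fin (N-1) → ℝ)) : ℝ :=
  ((μ.prod ν) (accN N η Δ)).toReal

def MSE_N (N : ℕ) (η Δ : ℝ) (μ : Measure ℝ) (ν : Measure (Fin (N-1) → ℝ)) : ℝ :=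
  ∫ p, (midN N p) ^ 2 ∂((μ.prod ν)[|accN N η Δ])

def mid2 (p : ℝ × ℝ) : ℝ := (max p.1 p.2 + min p.1 p.2) / 2

def acc2 (η Δ : ℝ) : Set (ℝ × ℝ) := {p | max p.1 p.2 - min p.1 p.2 ≤ η * Δ}

def PA_2 (η Δ : ℝ) (μ κ : Measure ℝ) : ℝ := ((μ.prod κ) (acc2 η Δ)).toReal

def MSE_2 (η Δ : ℝ) (μ κ : Measure ℝ) : ℝ :=
  ∫ p, (mid2 p) ^ 2 ∂((μ.prod κ)[|acc2 η Δ])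

def cN (N : ℕ) (η Δ : ℝ) (μ : Measure ℝ) (α : ℝ) : ℝ :=
  sSup {r | ∃ ν : Measure (Fin (N-1) → ℝ), IsProbabilityMeasure ν ∧
    α ≤ PA_N N η Δ μ ν ∧ r = MSE_N N η Δ μ ν}

def c2 (η Δ : ℝ) (μ : Measure ℝ) (α : ℝ) : ℝ :=
  sSup {r | ∃ κ : Measure ℝ, IsProbabilityMeasure κ ∧
    α ≤ PA_2 η Δ μ κ ∧ r = MSE_2 η Δ μ κ}

def IsBestResponseN (N : ℕ) (η Δ : ℝ) (μ : Measure ℝ) (QAD : ℝ → ℝ → ℝ)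
    (ν : Measure (Fin (N-1) → ℝ)) : Prop :=
  IsProbabilityMeasure ν ∧ 0 < PA_N N η Δ μ ν ∧
    ∀ ν' : Measure (Fin (N-1) → ℝ), IsProbabilityMeasure ν' → 0 < PA_N N η Δ μ ν' →
      QAD (MSE_N N η Δ μ ν') (PA_N N η Δ μ ν') ≤ QAD (MSE_N N η Δ μ ν) (PA_N N η Δ μ ν)

def IsBestResponse2 (η Δ : ℝ) (μ : Measure ℝ) (QAD : ℝ → ℝ → ℝ) (κ : Measure ℝ) : Prop :=
  IsProbabilityMeasure κ ∧ 0 < PA_2 η Δ μ κ ∧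
    ∀ κ' : Measure ℝ, IsProbabilityMeasure κ' → 0 < PA_2 η Δ μ κ' →
      QAD (MSE_2 η Δ μ κ') (PA_2 η Δ μ κ') ≤ QAD (MSE_2 η Δ μ κ) (PA_2 η Δ μ κ)

/-! ### Auxiliary lemmas -/

def tsel (η Δ m M : ℝ) : ℝ :=
  if η*Δ < M - m then (η+2)*Δ else if 0 ≤ M + m then M else m

lemma key_iff {η Δ : ℝ} (hΔ : 0 < Δ) (hη : 2 ≤ η) {m M n : ℝ} (hmM : m ≤ M)
    (h1 : -Δ ≤ n) (h2 : n ≤ Δ) :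
    (max n M - min n m ≤ η * Δ) ↔ (max n (tsel η Δ m M) - min n (tsel η Δ m M) ≤ η * Δ) := by
  have hηΔ : 2*Δ ≤ η*Δ := by nlinarith
  unfold tsel
  split_ifs with hbig hsign
  · constructor
    · intro h; exfalso; nlinarith [le_max_right n M, min_le_right n m]
    · intro h; exfalso
      have ht : n ≤ (η+2)*Δ := by nlinarith
      rw [max_eq_right ht, min_eq_left ht] at h; nlinarith
  · push_neg at hbig
    constructor
    · intro h
      have h3 : min n m ≤ min n M := min_le_min (le_refl n) hmM
      linarith
    · intro h
      rcases le_total n m with hnm | hnm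
      · rw [min_eq_left hnm]
        rwa [min_eq_left (hnm.trans hmM)] at h
      · rw [min_eq_right hnm]
        rcases le_total n M with hnM | hnM
        · rw [max_eq_right hnM]; linarith
        · rw [max_eq_left hnM] at h ⊢
          rw [min_eq_right hnM] at h
          linarith
  · push_neg at hbig hsign
    constructor
    · intro h
      have h3 : max n m ≤ max n M := max_le_max (le_refl n) hmM
      linarith
    · intro h
      rcases le_total n m with hnm | hnm
      · rw [min_eq_left hnm]
        rw [min_eq_left hnm, max_eq_right hnm] at h
        rw [max_eq_right (hnm.trans hmM)]
        linarith
      · rw [min_eq_right hnm]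
        rw [min_eq_right hnm, max_eq_left hnm] at h
        rcases le_total n M with hnM | hnM
        · rw [max_eq_right hnM]; linarith
        · rw [max_eq_left hnM]; linarith

lemma key_sq {η Δ : ℝ} (hΔ : 0 < Δ) (hη : 2 ≤ η) {m M n : ℝ} (hmM : m ≤ M)
    (hacc : max n M - min n m ≤ η * Δ) :
    ((max n M + min n m)/2)^2 ≤ ((max n (tsel η Δ m M) + min n (tsel η Δ m M))/2)^2 := by
  unfold tsel
  split_ifs with hbig hsign
  · exfalso; nlinarith [le_max_right n M, min_le_right n m]
  · rcases le_total n m with hnm | hnm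
    · rw [min_eq_left hnm, min_eq_left (hnm.trans hmM)]
    · rcases le_total n M with hnM | hnM
      · rw [min_eq_right hnm, max_eq_right hnM, min_eq_left hnM]
        nlinarith [mul_nonneg (sub_nonneg.mpr hnm) (by linarith : (0:ℝ) ≤ 2*M + m + n)]
      · rw [min_eq_right hnm, max_eq_left hnM, min_eq_right hnM]
        have hM0 : 0 ≤ M := by linarith
        nlinarith [mul_nonneg (sub_nonneg.mpr hmM) (by linarith : (0:ℝ) ≤ 2*n + m + M)]
  · push_neg at hbig hsign
    have hm0 : m < 0 := by linarith
    rcases le_total M n with hMn | hMn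
    · rw [max_eq_left hMn, max_eq_left (hmM.trans hMn), min_eq_right (hmM.trans hMn)]
    · rcases le_total n m with hnm | hnm
      · rw [min_eq_left hnm, max_eq_right (hnm.trans hmM), max_eq_right hnm]
        nlinarith [mul_nonneg (sub_nonneg.mpr hmM) (by linarith : (0:ℝ) ≤ -(m + M + 2*n))]
      · rw [min_eq_right hnm, max_eq_left hnm, max_eq_right hMn]
        nlinarith [mul_nonneg (sub_nonneg.mpr hMn) (by linarith : (0:ℝ) ≤ -(n + M + 2*m))]

lemma bound_aux {η Δ n a b : ℝ} (hΔ : 0 < Δ) (hη : 2 ≤ η) (h1 : -Δ ≤ n) (h2 : n ≤ Δ)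
    (hb : b ≤ n) (ha : n ≤ a) (h : a - b ≤ η*Δ) : ((a+b)/2)^2 ≤ ((η+2)*Δ)^2 := by
  have hηΔ : 2*Δ ≤ η*Δ := by nlinarith
  apply sq_le_sq' <;> nlinarith

def Tmap (N : ℕ) (η Δ : ℝ) (x : Fin (N-1) → ℝ) : ℝ := tsel η Δ (⨅ i, x i) (⨆ i, x i)

section meas

variable {N : ℕ} {η Δ : ℝ}

lemma measurable_supf (hN : 2 ≤ N) : Measurable fun x : Fin (N-1) → ℝ => ⨆ i, x i := by
  haveI : NeZero (N-1) := ⟨by omega⟩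
  have h : (fun x : Fin (N-1) → ℝ => ⨆ i, x i)
      = Finset.univ.sup' Finset.univ_nonempty (fun i (x : Fin (N-1) → ℝ) => x i) := by
    funext x
    rw [← Finset.sup'_univ_eq_ciSup]
    simp [Finset.sup'_apply]
  rw [h]
  exact Finset.measurable_sup' _ fun i _ => measurable_pi_apply i

lemma measurable_inff (hN : 2 ≤ N) : Measurable fun x : Fin (N-1) → ℝ => ⨅ i, x i := by
  haveI : NeZero (N-1) := ⟨by omega⟩
  have h : (fun x : Fin (N-1) → ℝ => ⨅ i, x i)
      = Finset.univ.inf' Finset.univ_nonempty (fun i (x : Fin (N-1) → ℝ) => x i) := by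
    funext x
    rw [← Finset.inf'_univ_eq_ciInf]
    simp [Finset.inf'_apply]
  rw [h]
  exact Finset.inf'_induction _ _ (fun f hf g hg => Measurable.inf hf hg)
    (fun i _ => measurable_pi_apply i)

lemma inff_le_supf (hN : 2 ≤ N) (x : Fin (N-1) → ℝ) : (⨅ i, x i) ≤ ⨆ i, x i := by
  haveI : NeZero (N-1) := ⟨by omega⟩
  exact le_trans (ciInf_le (Set.finite_range x).bddBelow (Classical.arbitrary _))
    (le_ciSup (Set.finite_range x).bddAbove _)

lemma measurable_Tmap (hN : 2 ≤ N) : Measurable (Tmap N η Δ) := by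
  unfold Tmap tsel
  exact Measurable.ite
    (measurableSet_lt measurable_const ((measurable_supf hN).sub (measurable_inff hN)))
    measurable_const
    (Measurable.ite (measurableSet_le measurable_const
      ((measurable_supf hN).add (measurable_inff hN)))
      (measurable_supf hN) (measurable_inff hN))

lemma measurable_midN (hN : 2 ≤ N) : Measurable (midN N) := by
  unfold midN
  exact ((measurable_fst.max ((measurable_supf hN).comp measurable_snd)).add
    (measurable_fst.min ((measurable_inff hN).comp measurable_snd))).div_const 2

lemma measurableSet_accN (hN : 2 ≤ N) : MeasurableSet (accN N η Δ) := by
  unfold accN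
  exact measurableSet_le ((measurable_fst.max ((measurable_supf hN).comp measurable_snd)).sub
    (measurable_fst.min ((measurable_inff hN).comp measurable_snd))) measurable_const

lemma measurable_mid2 : Measurable mid2 := by
  unfold mid2
  exact ((measurable_fst.max measurable_snd).add (measurable_fst.min measurable_snd)).div_const 2

lemma measurableSet_acc2 : MeasurableSet (acc2 η Δ) := by
  unfold acc2
  exact measurableSet_le ((measurable_fst.max measurable_snd).sub
    (measurable_fst.min measurable_snd)) measurable_const

end meas

section reduce

variable {N : ℕ} {η Δ : ℝ}

lemma reduce (hN : 2 ≤ N) (hΔ : 0 < Δ) (hη : 2 ≤ η)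
    (μ : Measure ℝ) [IsProbabilityMeasure μ] (hμ : μ (Set.Icc (-Δ) Δ) = 1)
    (ν : Measure (Fin (N-1) → ℝ)) [IsProbabilityMeasure ν] :
    IsProbabilityMeasure (ν.map (Tmap N η Δ)) ∧
    PA_2 η Δ μ (ν.map (Tmap N η Δ)) = PA_N N η Δ μ ν ∧
    MSE_N N η Δ μ ν ≤ MSE_2 η Δ μ (ν.map (Tmap N η Δ)) := by
  have hT : Measurable (Tmap N η Δ) := measurable_Tmap hN
  set F : ℝ × (Fin (N-1) → ℝ) → ℝ × ℝ := fun p => (p.1, Tmap N η Δ p.2) with hFdef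
  have hF : Measurable F := measurable_fst.prodMk (hT.comp measurable_snd)
  set P := μ.prod ν with hPdef
  have hmap : μ.prod (ν.map (Tmap N η Δ)) = P.map F := by
    have h := Measure.map_prod_map (f := id) (g := Tmap N η Δ) μ ν measurable_id hT
    rw [Measure.map_id] at h; rw [h]; rfl
  have hnull : P ((Set.Icc (-Δ) Δ)ᶜ ×ˢ (Set.univ : Set (Fin (N-1) → ℝ))) = 0 := by
    rw [Measure.prod_prod]
    have h0 : μ (Set.Icc (-Δ) Δ)ᶜ = 0 := by
      rw [measure_compl measurableSet_Icc (measure_ne_top μ _), hμ, measure_univ]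
      simp
    simp [h0]
  have hae : ∀ᵐ p ∂P, p.1 ∈ Set.Icc (-Δ) Δ := by
    rw [ae_iff]
    refine measure_mono_null ?_ hnull
    intro p hp
    simp only [Set.mem_prod, Set.mem_compl_iff, Set.mem_univ, and_true]
    exact hp
  have hiff : ∀ p : ℝ × (Fin (N-1) → ℝ), p.1 ∈ Set.Icc (-Δ) Δ →
      (p ∈ accN N η Δ ↔ p ∈ F ⁻¹' acc2 η Δ) := by
    intro p hp
    simp only [accN, acc2, Set.mem_setOf_eq, Set.mem_preimage, hFdef, Tmap]
    exact key_iff hΔ hη (inff_le_supf hN p.2) hp.1 hp.2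
  have haeset : accN N η Δ =ᵐ[P] F ⁻¹' acc2 η Δ := by
    rw [Filter.eventuallyEq_set]
    filter_upwards [hae] with p hp using hiff p hp
  have hmeas_eq : P.map F (acc2 η Δ) = P (accN N η Δ) := by
    rw [Measure.map_apply hF measurableSet_acc2, ← measure_congr haeset]
  have hPA : PA_2 η Δ μ (ν.map (Tmap N η Δ)) = PA_N N η Δ μ ν := by
    unfold PA_2 PA_N
    rw [hmap, hmeas_eq]
  refine ⟨Measure.isProbabilityMeasure_map hT.aemeasurable, hPA, ?_⟩
  unfold MSE_2 MSE_N ProbabilityTheory.cond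
  rw [hmap, hmeas_eq, integral_smul_measure, integral_smul_measure,
    Measure.restrict_map hF measurableSet_acc2,
    integral_map hF.aemeasurable ((measurable_mid2.pow_const 2).aestronglyMeasurable)]
  apply mul_le_mul_of_nonneg_left ?_ ENNReal.toReal_nonneg
  rw [← integral_indicator (measurableSet_accN hN), ← integral_indicator (hF measurableSet_acc2)]
  have hint2 : Integrable ((F ⁻¹' acc2 η Δ).indicator fun p => mid2 (F p) ^ 2) P := by
    refine (integrable_const (((η+2)*Δ)^2)).mono'
      ((((measurable_mid2.comp hF).pow_const 2).indicator (hF measurableSet_acc2)).aestronglyMeasurable) ?_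
    filter_upwards [hae] with p hp
    by_cases hm : p ∈ F ⁻¹' acc2 η Δ
    · rw [Set.indicator_of_mem hm]
      have hm' : max p.1 (Tmap N η Δ p.2) - min p.1 (Tmap N η Δ p.2) ≤ η * Δ := hm
      rw [Real.norm_eq_abs, abs_of_nonneg (sq_nonneg _)]
      exact bound_aux hΔ hη hp.1 hp.2 (min_le_left _ _) (le_max_left _ _) hm'
    · rw [Set.indicator_of_notMem hm]
      simp
      positivity
  have hint1 : Integrable ((accN N η Δ).indicator fun p => midN N p ^ 2) P := by
    refine (integrable_const (((η+2)*Δ)^2)).mono'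
      ((((measurable_midN hN).pow_const 2).indicator (measurableSet_accN hN)).aestronglyMeasurable) ?_
    filter_upwards [hae] with p hp
    by_cases hm : p ∈ accN N η Δ
    · rw [Set.indicator_of_mem hm]
      have hm' : max p.1 (⨆ i, p.2 i) - min p.1 (⨅ i, p.2 i) ≤ η * Δ := hm
      rw [Real.norm_eq_abs, abs_of_nonneg (sq_nonneg _)]
      exact bound_aux hΔ hη hp.1 hp.2
        ((min_le_left _ _)) (le_max_left _ _) hm'
    · rw [Set.indicator_of_notMem hm]
      simp
      positivity
  refine integral_mono_ae hint1 hint2 ?_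
  filter_upwards [hae] with p hp
  by_cases hm : p ∈ accN N η Δ
  · rw [Set.indicator_of_mem hm, Set.indicator_of_mem ((hiff p hp).mp hm)]
    have hm' : max p.1 (⨆ i, p.2 i) - min p.1 (⨅ i, p.2 i) ≤ η * Δ := hm
    exact key_sq hΔ hη (inff_le_supf hN p.2) hm'
  · rw [Set.indicator_of_notMem hm]
    exact Set.indicator_apply_nonneg (fun _ => sq_nonneg _)

lemma embed (hN : 2 ≤ N) (μ : Measure ℝ) [IsProbabilityMeasure μ]
    (κ : Measure ℝ) [IsProbabilityMeasure κ] :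
    IsProbabilityMeasure (κ.map (fun t (_ : Fin (N-1)) => t)) ∧
    PA_N N η Δ μ (κ.map (fun t (_ : Fin (N-1)) => t)) = PA_2 η Δ μ κ ∧
    MSE_N N η Δ μ (κ.map (fun t (_ : Fin (N-1)) => t)) = MSE_2 η Δ μ κ := by
  haveI : NeZero (N-1) := ⟨by omega⟩
  have hG : Measurable (fun t (_ : Fin (N-1)) => t : ℝ → Fin (N-1) → ℝ) :=
    measurable_pi_lambda _ fun _ => measurable_id
  set F2 : ℝ × ℝ → ℝ × (Fin (N-1) → ℝ) := fun p => (p.1, fun _ => p.2) with hF2def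
  have hF2 : Measurable F2 :=
    measurable_fst.prodMk (hG.comp measurable_snd)
  have hmap : μ.prod (κ.map (fun t (_ : Fin (N-1)) => t)) = (μ.prod κ).map F2 := by
    have h := Measure.map_prod_map (f := id) (g := fun t (_ : Fin (N-1)) => t) μ κ
      measurable_id hG
    rw [Measure.map_id] at h; rw [h]; rfl
  have hpre : F2 ⁻¹' accN N η Δ = acc2 η Δ := by
    ext p
    simp [accN, acc2, hF2def, ciSup_const, ciInf_const]
  have hmid : ∀ p : ℝ × ℝ, midN N (F2 p) = mid2 p := by
    intro p
    simp [midN, mid2, hF2def, ciSup_const, ciInf_const]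
  have hmeas_eq : (μ.prod κ).map F2 (accN N η Δ) = (μ.prod κ) (acc2 η Δ) := by
    rw [Measure.map_apply hF2 (measurableSet_accN hN), hpre]
  refine ⟨Measure.isProbabilityMeasure_map hG.aemeasurable, ?_, ?_⟩
  · unfold PA_N PA_2
    rw [hmap, hmeas_eq]
  · unfold MSE_N MSE_2 ProbabilityTheory.cond
    rw [hmap, hmeas_eq, integral_smul_measure, integral_smul_measure,
      Measure.restrict_map hF2 (measurableSet_accN hN), hpre,
      integral_map hF2.aemeasurable (((measurable_midN hN).pow_const 2).aestronglyMeasurable)]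
    congr 1
    apply integral_congr_ae
    filter_upwards with p
    rw [hmid p]

end reduce
theorem stmt17 {N : ℕ} (hN : 2 ≤ N) {Δ : ℝ} (hΔ : 0 < Δ)
    (μ : Measure ℝ) [IsProbabilityMeasure μ] (hμ : μ (Set.Icc (-Δ) Δ) = 1)
    (QAD : ℝ → ℝ → ℝ)
    (hQ1 : ∀ y : ℝ, StrictMono fun x => QAD x y) (hQ2 : ∀ x : ℝ, StrictMono (QAD x))
    (QDC : ℝ → ℝ → ℝ)
    (hD1 : ∀ y : ℝ, Antitone fun x => QDC x y) (hD2 : ∀ x : ℝ, Monotone (QDC x))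
    (hattN : ∀ η : ℝ, 2 ≤ η → ∀ a : ℝ, 0 < a → a ≤ 1 → ∃ ν : Measure (Fin (N-1) → ℝ),
      IsProbabilityMeasure ν ∧ a ≤ PA_N N η Δ μ ν ∧ MSE_N N η Δ μ ν = cN N η Δ μ a)
    (hatt2 : ∀ η : ℝ, 2 ≤ η → ∀ a : ℝ, 0 < a → a ≤ 1 → ∃ κ : Measure ℝ,
      IsProbabilityMeasure κ ∧ a ≤ PA_2 η Δ μ κ ∧ MSE_2 η Δ μ κ = c2 η Δ μ a)
    (hexN : ∀ η : ℝ, 2 ≤ η → ∃ ν : Measure (Fin (N-1) → ℝ), IsBestResponseN N η Δ μ QAD ν)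
    (hex2 : ∀ η : ℝ, 2 ≤ η → ∃ κ : Measure ℝ, IsBestResponse2 η Δ μ QAD κ)
    (VN V2 : ℝ → ℝ)
    (hVN : ∀ η : ℝ, VN η = sInf {u : ℝ | ∃ ν : Measure (Fin (N-1) → ℝ),
      IsBestResponseN N η Δ μ QAD ν ∧ u = QDC (MSE_N N η Δ μ ν) (PA_N N η Δ μ ν)})
    (hV2 : ∀ η : ℝ, V2 η = sInf {u : ℝ | ∃ κ : Measure ℝ,
      IsBestResponse2 η Δ μ QAD κ ∧ u = QDC (MSE_2 η Δ μ κ) (PA_2 η Δ μ κ)}) :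
    (∀ η : ℝ, 2 ≤ η → VN η = V2 η) ∧
      ∀ η₀ : ℝ, 2 ≤ η₀ →
        ((∀ η : ℝ, 2 ≤ η → VN η ≤ VN η₀) ↔ (∀ η : ℝ, 2 ≤ η → V2 η ≤ V2 η₀)) := by
  have main : ∀ η : ℝ, 2 ≤ η → VN η = V2 η := by
    intro η hη
    obtain ⟨ν₀, hν₀⟩ := hexN η hη
    obtain ⟨κ₀, hκ₀⟩ := hex2 η hη
    haveI := hν₀.1
    haveI := hκ₀.1
    obtain ⟨he1, he2, he3⟩ := embed (η := η) (Δ := Δ) hN μ κ₀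
    have hq21 : QAD (MSE_2 η Δ μ κ₀) (PA_2 η Δ μ κ₀)
        ≤ QAD (MSE_N N η Δ μ ν₀) (PA_N N η Δ μ ν₀) := by
      have h := hν₀.2.2 (κ₀.map (fun t _ => t)) he1 (by rw [he2]; exact hκ₀.2.1)
      rwa [he2, he3] at h
    obtain ⟨hr1, hr2, hr3⟩ := reduce hN hΔ hη μ hμ ν₀
    have hq12 : QAD (MSE_N N η Δ μ ν₀) (PA_N N η Δ μ ν₀)
        ≤ QAD (MSE_2 η Δ μ κ₀) (PA_2 η Δ μ κ₀) := by
      refine le_trans ?_ (hκ₀.2.2 (ν₀.map (Tmap N η Δ)) hr1 (by rw [hr2]; exact hν₀.2.1))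
      rw [hr2]
      exact (hQ1 _).monotone hr3
    have hq : QAD (MSE_N N η Δ μ ν₀) (PA_N N η Δ μ ν₀)
        = QAD (MSE_2 η Δ μ κ₀) (PA_2 η Δ μ κ₀) := le_antisymm hq12 hq21
    have hsets : {u : ℝ | ∃ ν : Measure (Fin (N-1) → ℝ),
        IsBestResponseN N η Δ μ QAD ν ∧ u = QDC (MSE_N N η Δ μ ν) (PA_N N η Δ μ ν)}
        = {u : ℝ | ∃ κ : Measure ℝ,
        IsBestResponse2 η Δ μ QAD κ ∧ u = QDC (MSE_2 η Δ μ κ) (PA_2 η Δ μ κ)} := by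
      ext u
      simp only [Set.mem_setOf_eq]
      constructor
      · rintro ⟨ν, hbr, rfl⟩
        haveI := hbr.1
        have hval : QAD (MSE_N N η Δ μ ν) (PA_N N η Δ μ ν)
            = QAD (MSE_N N η Δ μ ν₀) (PA_N N η Δ μ ν₀) :=
          le_antisymm (hν₀.2.2 ν hbr.1 hbr.2.1) (hbr.2.2 ν₀ hν₀.1 hν₀.2.1)
        obtain ⟨hk1, hk2, hk3⟩ := reduce hN hΔ hη μ hμ ν
        have hkpos : 0 < PA_2 η Δ μ (ν.map (Tmap N η Δ)) := by rw [hk2]; exact hbr.2.1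
        have hkle : QAD (MSE_2 η Δ μ (ν.map (Tmap N η Δ))) (PA_2 η Δ μ (ν.map (Tmap N η Δ)))
            ≤ QAD (MSE_2 η Δ μ κ₀) (PA_2 η Δ μ κ₀) := hκ₀.2.2 _ hk1 hkpos
        have hkge : QAD (MSE_N N η Δ μ ν₀) (PA_N N η Δ μ ν₀)
            ≤ QAD (MSE_2 η Δ μ (ν.map (Tmap N η Δ))) (PA_2 η Δ μ (ν.map (Tmap N η Δ))) := by
          rw [← hval, hk2]
          exact (hQ1 _).monotone hk3
        have hkeq : QAD (MSE_2 η Δ μ (ν.map (Tmap N η Δ))) (PA_2 η Δ μ (ν.map (Tmap N η Δ)))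
            = QAD (MSE_N N η Δ μ ν₀) (PA_N N η Δ μ ν₀) :=
          le_antisymm (hkle.trans hq.ge) hkge
        have h5 : QAD (MSE_2 η Δ μ (ν.map (Tmap N η Δ))) (PA_N N η Δ μ ν)
            = QAD (MSE_N N η Δ μ ν) (PA_N N η Δ μ ν) := by
          have h6 := hkeq.trans hval.symm
          rwa [hk2] at h6
        have hMSE : MSE_2 η Δ μ (ν.map (Tmap N η Δ)) = MSE_N N η Δ μ ν :=
          (hQ1 (PA_N N η Δ μ ν)).injective h5
        refine ⟨ν.map (Tmap N η Δ), ⟨hk1, hkpos, fun κ' h1 h2 =>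
          (hκ₀.2.2 κ' h1 h2).trans (hq.symm.trans hkeq.symm).le⟩, by rw [hMSE, hk2]⟩
      · rintro ⟨κ, hbr, rfl⟩
        haveI := hbr.1
        have hval : QAD (MSE_2 η Δ μ κ) (PA_2 η Δ μ κ)
            = QAD (MSE_2 η Δ μ κ₀) (PA_2 η Δ μ κ₀) :=
          le_antisymm (hκ₀.2.2 κ hbr.1 hbr.2.1) (hbr.2.2 κ₀ hκ₀.1 hκ₀.2.1)
        obtain ⟨hk1, hk2, hk3⟩ := embed (η := η) (Δ := Δ) hN μ κ
        refine ⟨κ.map (fun t _ => t), ⟨hk1, by rw [hk2]; exact hbr.2.1,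
          fun ν' h1 h2 => ?_⟩, by rw [hk2, hk3]⟩
        calc QAD (MSE_N N η Δ μ ν') (PA_N N η Δ μ ν')
            ≤ QAD (MSE_N N η Δ μ ν₀) (PA_N N η Δ μ ν₀) := hν₀.2.2 ν' h1 h2
          _ = QAD (MSE_2 η Δ μ κ₀) (PA_2 η Δ μ κ₀) := hq
          _ = QAD (MSE_2 η Δ μ κ) (PA_2 η Δ μ κ) := hval.symm
          _ = QAD (MSE_N N η Δ μ (κ.map (fun t _ => t)))
                (PA_N N η Δ μ (κ.map (fun t _ => t))) := by rw [hk2, hk3]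
    rw [hVN η, hV2 η, hsets]
  refine ⟨main, fun η₀ hη₀ => ?_⟩
  constructor <;> intro h η hη
  · rw [← main η hη, ← main η₀ hη₀]
    exact h η hη
  · rw [main η hη, main η₀ hη₀]
    exact h η hη
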